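/- The k-symmetrical finite automaton A associated to a k-word set F_k recognizes exactly the k-strictly-locally-testable language Loc(F_k), and A is unambiguous: every word of L(A) has exactly one accepting run. -/

import Mathlib

/-!
The `k`-symmetrical finite automaton associated to a `k`-word set `F_k`
(Definition 5 of "Higher-order Operator Precedence languages"), its language
(the `k`-strictly-locally-testable language `Loc(F_k)`) and its unambiguity.

A state is a pair `(β, α)` of `(k-1)`-words (look-back, look-ahead), both
factors of words of `F`.  A transition `(β, α) →ᵃ (β', α')` requires
`β' = t_{k-1}(βa)`, `α = i_{k-1}(aα')`, and consistency with `F` of the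
`k`-windows `βa` and `aα'`; the initial state has look-back `#^(k-1)` and all
`k`-windows of `β·α` in `F` (covering the words shorter than `k`), and the
final state has look-ahead `#^(k-1)`.
-/

namespace HOP

/-- `Loc(F_k)` with end-words `⍟ ∈ #⁺` of length `k-1`. -/
def LocRaw {υ : Type} (hash : υ) (k : ℕ) (F : Set (List υ)) : Set (List υ) :=
  {x | ∀ u : List υ, u.length = k →
    u <:+: (List.replicate (k - 1) hash ++ x ++ List.replicate (k - 1) hash) →
    u ∈ F}

/-- Length-`j` factors of words of `F`. -/
def fac {υ : Type} (j : ℕ) (F : Set (List υ)) : Set (List υ) :=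
  {u | u.length = j ∧ ∃ w ∈ F, u <:+: w}

/-- A valid state of the symmetrical automaton: both components are
`(k-1)`-factors of `F`-words. -/
def ValidState {υ : Type} (k : ℕ) (F : Set (List υ)) (p : List υ × List υ) : Prop :=
  p.1 ∈ fac (k - 1) F ∧ p.2 ∈ fac (k - 1) F

/-- The transition relation of the symmetrical automaton. -/
def SymTrans {υ : Type} (k : ℕ) (F : Set (List υ))
    (p : List υ × List υ) (a : υ) (q : List υ × List υ) : Prop :=
  ValidState k F p ∧ ValidState k F q ∧
  q.1 = (p.1 ++ [a]).drop 1 ∧ p.2 = (a :: q.2).take (k - 1) ∧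
  (p.1 ++ [a]) ∈ F ∧ (a :: q.2) ∈ F

/-- A run of a (labelled) transition system, recording the sequence of states
visited after the start state. -/
inductive RunL {S υ : Type} (δ : S → υ → S → Prop) : S → List υ → List S → Prop
  | nil (s : S) : RunL δ s [] []
  | cons {s s' : S} (a : υ) {x : List υ} {qs : List S} :
      δ s a s' → RunL δ s' x qs → RunL δ s (a :: x) (s' :: qs)

/-- An accepting run of the symmetrical automaton on `x`, starting in the
initial state `p` and visiting the states `qs`. -/
def AcceptRun {υ : Type} (hash : υ) (k : ℕ) (F : Set (List υ))
    (x : List υ) (p : List υ × List υ) (qs : List (List υ × List υ)) : Prop :=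
  p.1 = List.replicate (k - 1) hash ∧ ValidState k F p ∧
  (∀ u : List υ, u.length = k → u <:+: (p.1 ++ p.2) → u ∈ F) ∧
  RunL (SymTrans k F) p x qs ∧
  (∃ qf, (p :: qs).getLast? = some qf ∧ qf.2 = List.replicate (k - 1) hash)


/-! ### Auxiliary lemmas -/

lemma infix_prefix_or_tail {υ : Type} {u w : List υ} (h : u <:+: w) :
    u <+: w ∨ u <:+: w.drop 1 := by
  obtain ⟨s, t, rfl⟩ := h
  cases s with
  | nil => left; exact ⟨t, by simp⟩
  | cons c s' =>
    right
    exact ⟨s', t, by simp⟩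

lemma infix_suffix_or_dropLast {υ : Type} {u w : List υ} (h : u <:+: w) :
    u <:+ w ∨ u <:+: w.dropLast := by
  obtain ⟨s, t, rfl⟩ := h
  rcases t.eq_nil_or_concat with rfl | ⟨t', b, rfl⟩
  · left; exact ⟨s, by simp⟩
  · right
    have hw : s ++ u ++ t'.concat b = (s ++ u ++ t').concat b := by simp
    rw [hw, List.concat_eq_append, List.dropLast_concat]
    exact ⟨s, t', rfl⟩

lemma mem_fac_of_infix {υ : Type} {k : ℕ} (hk : 2 ≤ k) {F : Set (List υ)}
    {w : List υ} (hw : ∀ u : List υ, u.length = k → u <:+: w → u ∈ F)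
    (hlen : k ≤ w.length) {u : List υ} (hu : u.length = k - 1) (huw : u <:+: w) :
    u ∈ fac (k - 1) F := by
  refine ⟨hu, ?_⟩
  obtain ⟨s, t, rfl⟩ := huw
  rcases t with _ | ⟨c, t'⟩
  · rcases s.eq_nil_or_concat with rfl | ⟨s', b, rfl⟩
    · simp [hu] at hlen; omega
    · refine ⟨b :: u, hw _ (by simp [hu]; omega) ⟨s', [], by simp⟩, ?_⟩
      exact ⟨[b], [], by simp⟩
  · refine ⟨u ++ [c], hw _ (by simp [hu]; omega) ⟨s, t', by simp⟩, ?_⟩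
    exact ⟨[], [c], by simp⟩

/-- Along a transition, the good-window property propagates. -/
lemma trans_window {υ : Type} {k : ℕ} (hk : 2 ≤ k) {F : Set (List υ)}
    {p q : List υ × List υ} {a : υ} (tr : SymTrans k F p a q)
    (Hp : ∀ u : List υ, u.length = k → u <:+: p.1 ++ p.2 → u ∈ F) :
    ∀ u : List υ, u.length = k → u <:+: q.1 ++ q.2 → u ∈ F := by
  obtain ⟨⟨⟨hp1, -⟩, -⟩, ⟨-, h1q2, -⟩, hq1, hp2, hFa, hFb⟩ := tr
  intro u hu huq
  have hqq : q.1 ++ q.2 = (p.1 ++ a :: q.2).drop 1 := by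
    rw [show p.1 ++ a :: q.2 = (p.1 ++ [a]) ++ q.2 from by simp,
      List.drop_append_of_le_length (l₁ := p.1 ++ [a]) (by simp), hq1]
  have huW : u <:+: p.1 ++ a :: q.2 := by
    rw [hqq] at huq
    exact huq.trans (List.drop_suffix 1 _).isInfix
  rcases infix_suffix_or_dropLast huW with hsuf | hdl
  · have hWlen : (p.1 ++ a :: q.2).length = 2 * k - 1 := by
      simp [hp1, h1q2]; omega
    rw [List.suffix_iff_eq_drop, hWlen, hu,
      show 2 * k - 1 - k = k - 1 from by omega, List.drop_left' hp1] at hsuf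
    rw [hsuf]; exact hFb
  · have hdle : (p.1 ++ a :: q.2).dropLast = p.1 ++ p.2 := by
      have : (a :: q.2).dropLast = p.2 := by
        rw [List.dropLast_eq_take, hp2]
        congr 1
      rw [show p.1 ++ a :: q.2 = p.1 ++ (a :: q.2) from rfl]
      rw [List.dropLast_append_of_ne_nil (by simp), this]
    rw [hdle] at hdl
    exact Hp u hu hdl

/-- Every run that starts in a state whose windows are good and ends in a
final state only reads words all of whose windows are good. -/
lemma run_loc {υ : Type} (hash : υ) {k : ℕ} (hk : 2 ≤ k) {F : Set (List υ)}
    {p : List υ × List υ} {x : List υ} {qs : List (List υ × List υ)}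
    (hr : RunL (SymTrans k F) p x qs) :
    p.1.length = k - 1 →
    (∀ u : List υ, u.length = k → u <:+: p.1 ++ p.2 → u ∈ F) →
    (∃ qf, (p :: qs).getLast? = some qf ∧ qf.2 = List.replicate (k - 1) hash) →
    ∀ u : List υ, u.length = k →
      u <:+: p.1 ++ x ++ List.replicate (k - 1) hash → u ∈ F := by
  induction hr with
  | nil s =>
    rintro h1 Hp ⟨qf, hqf, hqf2⟩ u hu huw
    simp only [List.getLast?_singleton, Option.some.injEq] at hqf
    subst hqf
    apply Hp u hu
    rw [← hqf2] at huw
    simpa using huw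
  | @cons s s' a y rest tr hrest ih =>
    rintro h1 Hp hlast u hu huw
    have Hq := trans_window hk tr Hp
    obtain ⟨-, ⟨⟨hs'1, -⟩, -⟩, hq1, hp2, hFa, hFb⟩ := tr
    have hlast' : ∃ qf, (s' :: rest).getLast? = some qf ∧
        qf.2 = List.replicate (k - 1) hash := by
      obtain ⟨qf, hqf, h2⟩ := hlast
      exact ⟨qf, by rwa [List.getLast?_cons_cons] at hqf, h2⟩
    rcases infix_prefix_or_tail huw with hpre | htl
    · have : u = s.1 ++ [a] := by
        rw [List.prefix_iff_eq_take, hu,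
          show s.1 ++ (a :: y) ++ List.replicate (k - 1) hash
            = (s.1 ++ [a]) ++ (y ++ List.replicate (k - 1) hash) from by simp,
          List.take_left' (by simp [h1]; omega)] at hpre
        exact hpre
      rw [this]; exact hFa
    · apply ih hs'1 Hq hlast' u hu
      have heq : s'.1 ++ y ++ List.replicate (k - 1) hash
          = (s.1 ++ (a :: y) ++ List.replicate (k - 1) hash).drop 1 := by
        rw [hq1, show s.1 ++ (a :: y) ++ List.replicate (k - 1) hash
            = s.1 ++ (a :: (y ++ List.replicate (k - 1) hash)) from by simp,
          List.drop_append_of_le_length (by omega),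
          List.drop_append_of_le_length (by omega)]
        simp
      rw [heq]
      exact htl

/-- Existence of a run on a word all of whose windows (in context `β ⬝ _ ⬝ ⍟`)
are good. -/
lemma exists_run {υ : Type} (hash : υ) {k : ℕ} (hk : 2 ≤ k) {F : Set (List υ)} :
    ∀ (x β : List υ), β.length = k - 1 →
    (∀ u : List υ, u.length = k →
      u <:+: β ++ x ++ List.replicate (k - 1) hash → u ∈ F) →
    ∃ qs, RunL (SymTrans k F)
        (β, (x ++ List.replicate (k - 1) hash).take (k - 1)) x qs ∧
      ∃ qf, (((β, (x ++ List.replicate (k - 1) hash).take (k - 1))) :: qs).getLast?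
          = some qf ∧ qf.2 = List.replicate (k - 1) hash := by
  intro x
  induction x with
  | nil =>
    intro β hβ H
    refine ⟨[], RunL.nil _, ⟨_, rfl, ?_⟩⟩
    simp
  | cons a x' ih =>
    intro β hβ H
    have hβne : 1 ≤ β.length := by omega
    set h := List.replicate (k - 1) hash with hh
    have hhlen : h.length = k - 1 := by simp [hh]
    set β' := (β ++ [a]).drop 1 with hβ'def
    have hβ' : β'.length = k - 1 := by
      rw [hβ'def]
      simp [hβ]
    have hdrop : β' ++ x' ++ h = (β ++ (a :: x') ++ h).drop 1 := by
      rw [hβ'def, show β ++ (a :: x') ++ h = β ++ (a :: (x' ++ h)) from by simp,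
        List.drop_append_of_le_length hβne,
        List.drop_append_of_le_length hβne]
      simp
    have H' : ∀ u : List υ, u.length = k → u <:+: β' ++ x' ++ h → u ∈ F := by
      intro u hu huw
      apply H u hu
      rw [hdrop] at huw
      exact huw.trans (List.drop_suffix 1 _).isInfix
    obtain ⟨qs', hrun', qf, hqf, hqf2⟩ := ih β' hβ' H'
    set α := ((a :: x') ++ h).take (k - 1) with hα
    set α' := (x' ++ h).take (k - 1) with hα'
    have hαlen : α.length = k - 1 := by
      simp [hα]; omega
    have hα'len : α'.length = k - 1 := by
      simp [hα']; omega
    have hwlen : k ≤ (β ++ (a :: x') ++ h).length := by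
      simp [hβ, hhlen]; omega
    have hw'len : k ≤ (β' ++ x' ++ h).length := by
      simp [hβ', hhlen]; omega
    have hvp : ValidState k F (β, α) := by
      constructor
      · exact mem_fac_of_infix hk H hwlen hβ ⟨[], (a :: x') ++ h, by simp⟩
      · refine mem_fac_of_infix hk H hwlen hαlen ?_
        exact (List.take_prefix _ _).isInfix.trans ⟨β, [], by simp⟩
    have hvq : ValidState k F (β', α') := by
      constructor
      · exact mem_fac_of_infix hk H' hw'len hβ' ⟨[], x' ++ h, by simp⟩
      · refine mem_fac_of_infix hk H' hw'len hα'len ?_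
        exact (List.take_prefix _ _).isInfix.trans ⟨β', [], by simp⟩
    have hFa : β ++ [a] ∈ F := by
      apply H _ (by simp [hβ]; omega)
      exact ⟨[], x' ++ h, by simp⟩
    have hcons : (a :: α') = ((a :: x') ++ h).take k := by
      rw [show (a :: x') ++ h = a :: (x' ++ h) from by simp,
        show k = (k - 1) + 1 from by omega, List.take_succ_cons]
    have hFb : a :: α' ∈ F := by
      apply H _ (by simp [hα'len]; omega)
      rw [hcons]
      exact (List.take_prefix _ _).isInfix.trans ⟨β, [], by simp⟩
    have hp2 : α = (a :: α').take (k - 1) := by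
      rw [hα, hα', show (a :: x') ++ h = a :: (x' ++ h) from by simp,
        show k - 1 = (k - 2) + 1 from by omega, List.take_succ_cons,
        List.take_succ_cons, List.take_take]
      congr 2
      omega
    refine ⟨(β', α') :: qs', RunL.cons a ⟨hvp, hvq, rfl, hp2, hFa, hFb⟩ hrun',
      ⟨qf, ?_, hqf2⟩⟩
    rw [List.getLast?_cons_cons]
    exact hqf

/-- Unambiguity: two runs on the same word ending in final states coincide. -/
lemma run_unique {υ : Type} (hash : υ) {k : ℕ} {F : Set (List υ)} :
    ∀ (x : List υ) (p p' : List υ × List υ) (qs qs' : List (List υ × List υ)),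
    RunL (SymTrans k F) p x qs → RunL (SymTrans k F) p' x qs' → p.1 = p'.1 →
    (∃ qf, (p :: qs).getLast? = some qf ∧ qf.2 = List.replicate (k - 1) hash) →
    (∃ qf, (p' :: qs').getLast? = some qf ∧ qf.2 = List.replicate (k - 1) hash) →
    p = p' ∧ qs = qs' := by
  intro x
  induction x with
  | nil =>
    rintro p p' qs qs' hr hr' h1 ⟨qf, hqf, h2⟩ ⟨qf', hqf', h2'⟩
    cases hr; cases hr'
    simp only [List.getLast?_singleton, Option.some.injEq] at hqf hqf'
    subst hqf; subst hqf'
    exact ⟨Prod.ext h1 (h2.trans h2'.symm), rfl⟩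
  | cons a x' ih =>
    rintro p p' qs qs' hr hr' h1 hl hl'
    rcases hr with _ | @⟨_, q, _, _, rest, tr, hrest⟩
    rcases hr' with _ | @⟨_, q', _, _, rest', tr', hrest'⟩
    have hq1 : q.1 = q'.1 := by
      rw [tr.2.2.1, tr'.2.2.1, h1]
    have hl2 : ∃ qf, (q :: rest).getLast? = some qf ∧
        qf.2 = List.replicate (k - 1) hash := by
      obtain ⟨qf, hqf, h2⟩ := hl
      exact ⟨qf, by rwa [List.getLast?_cons_cons] at hqf, h2⟩
    have hl2' : ∃ qf, (q' :: rest').getLast? = some qf ∧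
        qf.2 = List.replicate (k - 1) hash := by
      obtain ⟨qf, hqf, h2⟩ := hl'
      exact ⟨qf, by rwa [List.getLast?_cons_cons] at hqf, h2⟩
    obtain ⟨hqq, hqs⟩ := ih q q' rest rest' hrest hrest' hq1 hl2 hl2'
    refine ⟨Prod.ext h1 ?_, by rw [hqq, hqs]⟩
    rw [tr.2.2.2.1, tr'.2.2.2.1, hqq]

/-- **Properties of the symmetrical automaton** (Section 4): it recognizes
exactly `Loc(F_k)`, and it is unambiguous: every recognized word has exactly
one accepting run. -/
theorem symAut_correct_and_unambiguous {υ : Type} (hash : υ) (k : ℕ)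
    (hk : 2 ≤ k) (F : Set (List υ)) (hF : ∀ u ∈ F, u.length = k) :
    (∀ x : List υ, (∃ p qs, AcceptRun hash k F x p qs) ↔ x ∈ LocRaw hash k F) ∧
    (∀ x p qs p' qs', AcceptRun hash k F x p qs → AcceptRun hash k F x p' qs' →
      p = p' ∧ qs = qs') := by
  constructor
  · intro x
    constructor
    · rintro ⟨p, qs, hp1, hval, Hp, hrun, hlast⟩ u hu hinf
      apply run_loc hash hk hrun (by rw [hp1]; simp) Hp hlast u hu
      rwa [hp1]
    · intro hx
      set h := List.replicate (k - 1) hash with hh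
      have hhlen : h.length = k - 1 := by simp [hh]
      have H : ∀ u : List υ, u.length = k → u <:+: h ++ x ++ h → u ∈ F := by
        intro u hu huw
        exact hx u hu huw
      obtain ⟨qs, hrun, hlast⟩ := exists_run hash hk x h hhlen H
      refine ⟨_, qs, rfl, ?_, ?_, hrun, hlast⟩
      · have hwlen : k ≤ (h ++ x ++ h).length := by
          simp [hhlen]; omega
        constructor
        · exact mem_fac_of_infix hk H hwlen hhlen ⟨[], x ++ h, by simp⟩
        · refine mem_fac_of_infix hk H hwlen (by simp [hhlen]) ?_
          exact (List.take_prefix _ _).isInfix.trans ⟨h, [], by simp [hh]⟩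
      · intro u hu huw
        apply H u hu
        refine huw.trans ⟨[], (x ++ h).drop (k - 1), ?_⟩
        simp [List.append_assoc, hh]
  · intro x p qs p' qs' h h'
    obtain ⟨hp1, -, -, hrun, hlast⟩ := h
    obtain ⟨hp1', -, -, hrun', hlast'⟩ := h'
    exact run_unique hash x p p' qs qs' hrun hrun' (by rw [hp1, hp1']) hlast hlast'


end HOP
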